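/- Let T > 0, let L(v) = v·log((v + √(v² + 4))/2) − √(v² + 4) + 2, and let γ : [0,T] → ℝ be absolutely continuous. Then the supremum, over all finite partitions 0 = t₀ < t₁ < ⋯ < t_n = T, of ∑_{i=0}^{n−1} (t_{i+1} − t_i)·L( (γ(t_{i+1}) − γ(t_i)) / (t_{i+1} − t_i) ) equals ∫₀ᵀ L(γ'(s)) ds (as an identity in [0, +∞]). -/

import Mathlib

open MeasureTheory Set Filter Topology


noncomputable def Lf (v : ℝ) : ℝ :=
  v * Real.log ((v + Real.sqrt (v ^ 2 + 4)) / 2) - Real.sqrt (v ^ 2 + 4) + 2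

lemma sqrt_gt_neg (v : ℝ) : -v < Real.sqrt (v ^ 2 + 4) := by
  nlinarith [Real.sq_sqrt (by positivity : (0:ℝ) ≤ v ^ 2 + 4),
    Real.sqrt_nonneg (v ^ 2 + 4)]

lemma arg_pos (v : ℝ) : 0 < (v + Real.sqrt (v ^ 2 + 4)) / 2 := by
  have := sqrt_gt_neg v; linarith

lemma exp_l0 (v : ℝ) :
    Real.exp (Real.log ((v + Real.sqrt (v ^ 2 + 4)) / 2)) =
      (v + Real.sqrt (v ^ 2 + 4)) / 2 :=
  Real.exp_log (arg_pos v)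

lemma exp_neg_l0 (v : ℝ) :
    Real.exp (-Real.log ((v + Real.sqrt (v ^ 2 + 4)) / 2)) =
      (Real.sqrt (v ^ 2 + 4) - v) / 2 := by
  rw [Real.exp_neg, exp_l0]
  have h4 : (v + Real.sqrt (v ^ 2 + 4)) * (Real.sqrt (v ^ 2 + 4) - v) = 4 := by
    nlinarith [Real.sq_sqrt (by positivity : (0:ℝ) ≤ v ^ 2 + 4)]
  have := arg_pos v
  rw [eq_div_iff (by norm_num : (2:ℝ) ≠ 0), inv_mul_eq_div,
    div_eq_iff (by positivity : (v + Real.sqrt (v ^ 2 + 4)) / 2 ≠ 0)]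
  nlinarith

lemma L_eq (v : ℝ) :
    Lf v = Real.log ((v + Real.sqrt (v ^ 2 + 4)) / 2) * v -
      (Real.exp (Real.log ((v + Real.sqrt (v ^ 2 + 4)) / 2)) +
       Real.exp (-Real.log ((v + Real.sqrt (v ^ 2 + 4)) / 2)) - 2) := by
  rw [exp_l0, exp_neg_l0, Lf]; ring

lemma L_ge (l v : ℝ) : l * v - (Real.exp l + Real.exp (-l) - 2) ≤ Lf v := by
  set l0 := Real.log ((v + Real.sqrt (v ^ 2 + 4)) / 2) with hl0
  have hep : Real.exp l0 = (v + Real.sqrt (v ^ 2 + 4)) / 2 := exp_l0 v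
  have hem : Real.exp (-l0) = (Real.sqrt (v ^ 2 + 4) - v) / 2 := exp_neg_l0 v
  have h1 : Real.exp l0 * (1 + (l - l0)) ≤ Real.exp l := by
    have := Real.add_one_le_exp (l - l0)
    have hpos := Real.exp_pos l0
    calc Real.exp l0 * (1 + (l - l0)) ≤ Real.exp l0 * Real.exp (l - l0) := by
          nlinarith
      _ = Real.exp l := by rw [← Real.exp_add]; ring_nf
  have h2 : Real.exp (-l0) * (1 - (l - l0)) ≤ Real.exp (-l) := by
    have := Real.add_one_le_exp (l0 - l)
    have hpos := Real.exp_pos (-l0)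
    calc Real.exp (-l0) * (1 - (l - l0)) ≤ Real.exp (-l0) * Real.exp (l0 - l) := by
          nlinarith
      _ = Real.exp (-l) := by rw [← Real.exp_add]; ring_nf
  rw [L_eq v, ← hl0, hep, hem] at *
  nlinarith

lemma L_nonneg (v : ℝ) : 0 ≤ Lf v := by
  have := L_ge 0 v; simp at this; linarith

lemma L_cont : Continuous Lf := by
  have hs : Continuous fun v : ℝ => Real.sqrt (v ^ 2 + 4) :=
    Real.continuous_sqrt.comp (by continuity)
  have harg : Continuous fun v : ℝ => (v + Real.sqrt (v ^ 2 + 4)) / 2 := by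
    fun_prop
  have hlog : Continuous fun v : ℝ =>
      Real.log ((v + Real.sqrt (v ^ 2 + 4)) / 2) :=
    Continuous.log harg (fun v => ne_of_gt (arg_pos v))
  unfold Lf; fun_prop

/-- `ofReal (∫ f) ≤ ∫⁻ ofReal f` for integrable `f`. -/
lemma ofReal_int_le {f : ℝ → ℝ} {μ : Measure ℝ} (hf : Integrable f μ) :
    ENNReal.ofReal (∫ x, f x ∂μ) ≤ ∫⁻ x, ENNReal.ofReal (f x) ∂μ := by
  have h1 : ∫ x, f x ∂μ ≤ ∫ x, max (f x) 0 ∂μ :=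
    integral_mono hf (hf.sup (integrable_zero _ _ _)) fun x => le_max_left _ _
  have h2 : ENNReal.ofReal (∫ x, max (f x) 0 ∂μ) =
      ∫⁻ x, ENNReal.ofReal (max (f x) 0) ∂μ :=
    ofReal_integral_eq_lintegral_ofReal (hf.sup (integrable_zero _ _ _))
      (Filter.Eventually.of_forall fun x => le_max_right _ _)
  calc ENNReal.ofReal (∫ x, f x ∂μ) ≤ ENNReal.ofReal (∫ x, max (f x) 0 ∂μ) :=
        ENNReal.ofReal_le_ofReal h1
    _ = ∫⁻ x, ENNReal.ofReal (max (f x) 0) ∂μ := h2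
    _ = ∫⁻ x, ENNReal.ofReal (f x) ∂μ := by
        congr 1; funext x
        rcases le_total (f x) 0 with h | h
        · simp [max_eq_right h, ENNReal.ofReal_eq_zero.2 h]
        · rw [max_eq_left h]

lemma interval_le {g : ℝ → ℝ} {a b : ℝ} (hab : a < b)
    (hg : IntegrableOn g (Set.Ioc a b)) :
    ENNReal.ofReal ((b - a) * Lf ((∫ s in Set.Ioc a b, g s) / (b - a))) ≤
      ∫⁻ s in Set.Ioc a b, ENNReal.ofReal (Lf (g s)) := by
  set Δ := ∫ s in Set.Ioc a b, g s with hΔ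
  set v := Δ / (b - a) with hv
  set l0 := Real.log ((v + Real.sqrt (v ^ 2 + 4)) / 2) with hl0
  set c := Real.exp l0 + Real.exp (-l0) - 2 with hc
  clear_value c l0 v Δ
  have hba : (0:ℝ) < b - a := by linarith
  have hμ : volume (Set.Ioc a b) < ⊤ := measure_Ioc_lt_top
  have hconst : IntegrableOn (fun _ : ℝ => c) (Set.Ioc a b) :=
    integrableOn_const hμ.ne
  have hint : IntegrableOn (fun s => l0 * g s - c) (Set.Ioc a b) :=
    (hg.const_mul l0).sub hconst
  have hI : ∫ s in Set.Ioc a b, (l0 * g s - c) = (b - a) * Lf v := by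
    rw [integral_sub (hg.const_mul l0) hconst, MeasureTheory.integral_const_mul,
      setIntegral_const, L_eq v, ← hl0, ← hc, measureReal_def, Real.volume_Ioc,
      ENNReal.toReal_ofReal hba.le]
    have : v * (b - a) = Δ := by
      rw [hv]; field_simp
    simp only [smul_eq_mul]
    rw [← hΔ]
    linear_combination (-l0) * this
  calc ENNReal.ofReal ((b - a) * Lf v)
      = ENNReal.ofReal (∫ s in Set.Ioc a b, (l0 * g s - c)) := by rw [hI]
    _ ≤ ∫⁻ s in Set.Ioc a b, ENNReal.ofReal (l0 * g s - c) := ofReal_int_le hint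
    _ ≤ ∫⁻ s in Set.Ioc a b, ENNReal.ofReal (Lf (g s)) := by
        refine lintegral_mono fun s => ENNReal.ofReal_le_ofReal ?_
        have := L_ge l0 (g s)
        rw [hc]; linarith

noncomputable def avgf (f : ℝ → ℝ) (d : ℝ) (j : ℤ) : ℝ :=
  ⨍ y in Metric.closedBall (((j : ℝ) + 1 / 2) * d) (d / 2), f y

lemma g_meas (f : ℝ → ℝ) (d : ℝ) :
    Measurable fun x => ENNReal.ofReal (Lf (avgf f d ⌊x / d⌋)) := by
  refine ENNReal.measurable_ofReal.comp (L_cont.measurable.comp ?_)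
  exact (measurable_of_countable (avgf f d)).comp
    (Int.measurable_floor.comp (measurable_id.div_const d))

lemma conv_ae {T : ℝ} (hT : 0 < T) {f : ℝ → ℝ} (hf : Integrable f volume) :
    ∀ᵐ x, Tendsto (fun k : ℕ => avgf f (T / (k + 1)) ⌊x / (T / (k + 1))⌋)
      atTop (𝓝 (f x)) := by
  filter_upwards [IsUnifLocDoublingMeasure.ae_tendsto_average
    (μ := (volume : Measure ℝ)) hf.locallyIntegrable 1] with x hx
  have hd : ∀ k : ℕ, 0 < T / (k + 1) := fun k => by positivity
  have hδ : Tendsto (fun k : ℕ => T / (k + 1) / 2) atTop (𝓝[>] 0) := by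
    refine tendsto_nhdsWithin_iff.2 ⟨?_, Eventually.of_forall fun k => by
      have := hd k; exact div_pos this two_pos⟩
    have : (fun k : ℕ => T / (k + 1) / 2) = fun k : ℕ => (T / 2) * (1 / (k + 1)) := by
      funext k; ring
    rw [this]
    simpa using tendsto_one_div_add_atTop_nhds_zero_nat.const_mul (T / 2)
  have hxmem : ∀ᶠ k : ℕ in atTop, x ∈ Metric.closedBall
      (((⌊x / (T / (k + 1))⌋ : ℝ) + 1 / 2) * (T / (k + 1))) (1 * (T / (k + 1) / 2)) := by
    refine Eventually.of_forall fun k => ?_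
    set d := T / (k + 1) with hdk
    have hd0 : 0 < d := hd k
    have h1 : (⌊x / d⌋ : ℝ) ≤ x / d := Int.floor_le _
    have h2 : x / d < ⌊x / d⌋ + 1 := Int.lt_floor_add_one _
    have h1' : (⌊x / d⌋ : ℝ) * d ≤ x := by
      rw [← le_div_iff₀ hd0]; linarith
    have h2' : x < ((⌊x / d⌋ : ℝ) + 1) * d := by
      rw [← div_lt_iff₀ hd0]; linarith
    rw [Metric.mem_closedBall, Real.dist_eq, abs_le]
    constructor <;> nlinarith
  exact hx (fun k : ℕ => ((⌊x / (T / (k + 1))⌋ : ℝ) + 1 / 2) * (T / (k + 1)))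
    (fun k : ℕ => T / (k + 1) / 2) hδ hxmem

lemma avgf_eq {f : ℝ → ℝ} {d : ℝ} (hd : 0 < d) (j : ℤ) :
    avgf f d j = (∫ y in Icc ((j : ℝ) * d) (((j : ℝ) + 1) * d), f y) / d := by
  rw [avgf, setAverage_eq]
  have hcb : Metric.closedBall (((j : ℝ) + 1 / 2) * d) (d / 2) =
      Icc ((j : ℝ) * d) (((j : ℝ) + 1) * d) := by
    rw [Real.closedBall_eq_Icc]; congr 1 <;> ring
  rw [hcb, measureReal_def, Real.volume_Icc]
  have h : ((j : ℝ) + 1) * d - (j : ℝ) * d = d := by ring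
  rw [h, ENNReal.toReal_ofReal hd.le, smul_eq_mul, div_eq_inv_mul]

lemma floor_eq_on_Ico {d : ℝ} (hd : 0 < d) {j : ℤ} {x : ℝ}
    (h1 : (j : ℝ) * d ≤ x) (h2 : x < ((j : ℝ) + 1) * d) : ⌊x / d⌋ = j := by
  rw [Int.floor_eq_iff]
  constructor
  · rw [le_div_iff₀ hd]; linarith
  · rw [div_lt_iff₀ hd]; push_cast; linarith

lemma eval_k {T : ℝ} (hT : 0 < T) (f : ℝ → ℝ) (k : ℕ) :
    (∫⁻ s in Icc (0 : ℝ) T,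
        ENNReal.ofReal (Lf (avgf f (T / (k + 1)) ⌊s / (T / (k + 1))⌋))) =
      ∑ i : Fin (k + 1),
        ENNReal.ofReal ((T / (k + 1)) * Lf (avgf f (T / (k + 1)) (i : ℕ))) := by
  set d := T / (k + 1) with hdk
  have hd : 0 < d := by positivity
  have hdT : ((k : ℝ) + 1) * d = T := by
    rw [hdk]; field_simp
  have hres : (volume : Measure ℝ).restrict (Icc 0 T) = volume.restrict (Ico 0 T) :=
    (Measure.restrict_congr_set Ico_ae_eq_Icc).symm
  have hun : Ico (0 : ℝ) T = ⋃ i : Fin (k + 1), Ico ((i : ℕ) * d) (((i : ℕ) + 1) * d) := by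
    ext x
    simp only [mem_Ico, mem_iUnion]
    constructor
    · rintro ⟨hx0, hxT⟩
      have hx0' : 0 ≤ x / d := by positivity
      have hm0 : 0 ≤ ⌊x / d⌋ := Int.floor_nonneg.2 hx0'
      have hmk : ⌊x / d⌋ < (k : ℤ) + 1 := by
        rw [Int.floor_lt, div_lt_iff₀ hd]
        push_cast
        linarith [hdT]
      have hmlt : ⌊x / d⌋.toNat < k + 1 := by omega
      refine ⟨⟨⌊x / d⌋.toNat, hmlt⟩, ?_, ?_⟩
      · have h1 := Int.floor_le (x / d)
        rw [← le_div_iff₀ hd]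
        have h2 : ((⌊x / d⌋.toNat : ℕ) : ℝ) = (⌊x / d⌋ : ℝ) := by
          exact_mod_cast congrArg Int.cast (Int.toNat_of_nonneg hm0)
        rw [h2]; exact h1
      · have := Int.lt_floor_add_one (x / d)
        rw [← div_lt_iff₀ hd]
        have h2 : ((⌊x / d⌋.toNat : ℕ) : ℝ) = (⌊x / d⌋ : ℝ) := by
          exact_mod_cast congrArg Int.cast (Int.toNat_of_nonneg hm0)
        rw [h2]; exact this
    · rintro ⟨i, h1, h2⟩
      have hik : (i : ℕ) + 1 ≤ k + 1 := i.isLt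
      constructor
      · have : (0 : ℝ) ≤ (i : ℕ) * d := by positivity
        linarith
      · have : ((i : ℕ) : ℝ) + 1 ≤ (k : ℝ) + 1 := by exact_mod_cast hik
        nlinarith
  rw [hres, hun, lintegral_iUnion (fun i => measurableSet_Ico)
    (fun i j hij => ?_), tsum_fintype]
  · refine Finset.sum_congr rfl fun i _ => ?_
    have hcongr : ∀ x ∈ Ico ((i : ℕ) * d) (((i : ℕ) + 1) * d),
        ENNReal.ofReal (Lf (avgf f d ⌊x / d⌋)) =
          ENNReal.ofReal (Lf (avgf f d (i : ℕ))) := by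
      intro x hx
      rw [floor_eq_on_Ico hd (by exact_mod_cast hx.1) (by exact_mod_cast hx.2)]
    rw [setLIntegral_congr_fun measurableSet_Ico hcongr,
      setLIntegral_const, Real.volume_Ico]
    have h : ((i : ℕ) + 1) * d - (i : ℕ) * d = d := by ring
    rw [h, ← ENNReal.ofReal_mul (L_nonneg _), mul_comm]
  · -- pairwise disjoint
    rcases hij.lt_or_gt with h | h
    · refine Set.Ico_disjoint_Ico.2 ?_
      have : (i : ℕ) + 1 ≤ (j : ℕ) := h
      have : ((i : ℕ) : ℝ) + 1 ≤ ((j : ℕ) : ℝ) := by exact_mod_cast this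
      refine le_trans (min_le_left _ _) (le_trans ?_ (le_max_right _ _))
      nlinarith
    · refine Set.Ico_disjoint_Ico.2 ?_
      have : (j : ℕ) + 1 ≤ (i : ℕ) := h
      have : ((j : ℕ) : ℝ) + 1 ≤ ((i : ℕ) : ℝ) := by exact_mod_cast this
      refine le_trans (min_le_right _ _) (le_trans ?_ (le_max_left _ _))
      nlinarith

open MeasureTheory ENNReal in
theorem partition_sup_eq_integral (T : ℝ) (hT : 0 < T) (γ γ' : ℝ → ℝ)
    (hint : IntegrableOn γ' (Set.Icc 0 T))
    (hAC : ∀ t ∈ Set.Icc (0 : ℝ) T, γ t = γ 0 + ∫ s in Set.Ioc (0 : ℝ) t, γ' s) :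
    sSup {S : ℝ≥0∞ | ∃ (n : ℕ) (t : Fin (n + 1) → ℝ),
        StrictMono t ∧ t 0 = 0 ∧ t (Fin.last n) = T ∧
        S = ∑ i : Fin n, ENNReal.ofReal ((t i.succ - t i.castSucc) *
          (((γ (t i.succ) - γ (t i.castSucc)) / (t i.succ - t i.castSucc)) *
              Real.log ((((γ (t i.succ) - γ (t i.castSucc)) / (t i.succ - t i.castSucc)) +
                Real.sqrt (((γ (t i.succ) - γ (t i.castSucc)) /
                  (t i.succ - t i.castSucc)) ^ 2 + 4)) / 2) -
            Real.sqrt (((γ (t i.succ) - γ (t i.castSucc)) /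
              (t i.succ - t i.castSucc)) ^ 2 + 4) + 2))} =
      ∫⁻ s in Set.Icc (0 : ℝ) T,
        ENNReal.ofReal (γ' s * Real.log ((γ' s + Real.sqrt (γ' s ^ 2 + 4)) / 2) -
          Real.sqrt (γ' s ^ 2 + 4) + 2) := by
  have hLfold : ∀ v : ℝ, v * Real.log ((v + Real.sqrt (v ^ 2 + 4)) / 2) -
      Real.sqrt (v ^ 2 + 4) + 2 = Lf v := fun v => rfl
  -- difference of γ as integral
  have hdiff : ∀ a b : ℝ, 0 ≤ a → a ≤ b → b ≤ T →
      γ b - γ a = ∫ s in Set.Ioc a b, γ' s := by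
    intro a b ha hab hbT
    have haT : a ≤ T := le_trans hab hbT
    have hb0 : 0 ≤ b := le_trans ha hab
    rw [hAC b ⟨hb0, hbT⟩, hAC a ⟨ha, haT⟩]
    have hsplit : Set.Ioc (0 : ℝ) b = Set.Ioc 0 a ∪ Set.Ioc a b :=
      (Set.Ioc_union_Ioc_eq_Ioc ha hab).symm
    have h1 : IntegrableOn γ' (Set.Ioc 0 a) :=
      hint.mono_set (fun x hx => ⟨hx.1.le, le_trans hx.2 haT⟩)
    have h2 : IntegrableOn γ' (Set.Ioc a b) :=
      hint.mono_set (fun x hx => ⟨le_trans ha hx.1.le, le_trans hx.2 hbT⟩)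
    rw [hsplit, setIntegral_union (Set.Ioc_disjoint_Ioc_of_le le_rfl) measurableSet_Ioc h1 h2]
    ring
  simp only [hLfold]
  apply le_antisymm
  · -- sup ≤ integral
    refine sSup_le ?_
    rintro S ⟨n, t, hmono, h0, hlast, rfl⟩
    have hb : ∀ i : Fin (n + 1), 0 ≤ t i ∧ t i ≤ T := fun i =>
      ⟨h0 ▸ hmono.monotone (Fin.zero_le i), hlast ▸ hmono.monotone (Fin.le_last i)⟩
    have hab : ∀ i : Fin n, t i.castSucc < t i.succ :=
      fun i => hmono Fin.castSucc_lt_succ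
    calc ∑ i : Fin n, ENNReal.ofReal ((t i.succ - t i.castSucc) *
          Lf ((γ (t i.succ) - γ (t i.castSucc)) / (t i.succ - t i.castSucc)))
        ≤ ∑ i : Fin n, ∫⁻ s in Set.Ioc (t i.castSucc) (t i.succ),
            ENNReal.ofReal (Lf (γ' s)) := by
          refine Finset.sum_le_sum fun i _ => ?_
          rw [hdiff _ _ (hb i.castSucc).1 (hab i).le (hb i.succ).2]
          exact interval_le (hab i)
            (hint.mono_set fun x hx =>
              ⟨le_trans (hb i.castSucc).1 hx.1.le, le_trans hx.2 (hb i.succ).2⟩)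
      _ = ∫⁻ s in ⋃ i : Fin n, Set.Ioc (t i.castSucc) (t i.succ),
            ENNReal.ofReal (Lf (γ' s)) := by
          rw [lintegral_iUnion (fun i => measurableSet_Ioc), tsum_fintype]
          rintro i j hij
          rcases hij.lt_or_gt with h | h
          · exact Set.Ioc_disjoint_Ioc.2 (le_trans (min_le_left _ _)
              (le_trans (hmono.monotone (Fin.succ_le_castSucc_iff.2 h))
                (le_max_right _ _)))
          · exact Set.Ioc_disjoint_Ioc.2 (le_trans (min_le_right _ _)
              (le_trans (hmono.monotone (Fin.succ_le_castSucc_iff.2 h))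
                (le_max_left _ _)))
      _ ≤ ∫⁻ s in Set.Icc (0 : ℝ) T, ENNReal.ofReal (Lf (γ' s)) := by
          refine lintegral_mono_set (Set.iUnion_subset fun i x hx =>
            ⟨le_trans (hb i.castSucc).1 hx.1.le, le_trans hx.2 (hb i.succ).2⟩)
  · -- integral ≤ sup
    set f := (Set.Icc (0 : ℝ) T).indicator γ' with hfdef
    have hfi : Integrable f := hint.integrable_indicator measurableSet_Icc
    set G : ℕ → ℝ → ℝ≥0∞ := fun k x =>
      ENNReal.ofReal (Lf (avgf f (T / (k + 1)) ⌊x / (T / (k + 1))⌋)) with hGdef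
    have h1 : (∫⁻ s in Set.Icc (0 : ℝ) T, ENNReal.ofReal (Lf (γ' s))) ≤
        liminf (fun k => ∫⁻ s in Set.Icc (0 : ℝ) T, G k s) atTop := by
      have h3 : ∀ᵐ x, liminf (fun k => G k x) atTop = ENNReal.ofReal (Lf (f x)) := by
        filter_upwards [conv_ae hT hfi] with x hx
        exact ((ENNReal.continuous_ofReal.tendsto _).comp
          ((L_cont.tendsto _).comp hx)).liminf_eq
      have hae : ∀ᵐ x ∂(volume.restrict (Set.Icc (0 : ℝ) T)),
          ENNReal.ofReal (Lf (γ' x)) = liminf (fun k => G k x) atTop := by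
        filter_upwards [ae_restrict_of_ae h3, ae_restrict_mem measurableSet_Icc]
          with x hx hmem
        rw [hx, hfdef, Set.indicator_of_mem hmem]
      calc (∫⁻ s in Set.Icc (0 : ℝ) T, ENNReal.ofReal (Lf (γ' s)))
          = ∫⁻ s in Set.Icc (0 : ℝ) T, liminf (fun k => G k s) atTop :=
            lintegral_congr_ae hae
        _ ≤ liminf (fun k => ∫⁻ s in Set.Icc (0 : ℝ) T, G k s) atTop :=
            lintegral_liminf_le fun k => g_meas f _
    refine h1.trans ?_
    have h4 : ∀ k : ℕ, (∫⁻ s in Set.Icc (0 : ℝ) T, G k s) ∈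
        {S : ℝ≥0∞ | ∃ (n : ℕ) (t : Fin (n + 1) → ℝ),
          StrictMono t ∧ t 0 = 0 ∧ t (Fin.last n) = T ∧
          S = ∑ i : Fin n, ENNReal.ofReal ((t i.succ - t i.castSucc) *
            Lf ((γ (t i.succ) - γ (t i.castSucc)) / (t i.succ - t i.castSucc)))} := by
      intro k
      set d := T / (k + 1) with hdk
      have hd : 0 < d := by positivity
      have hdT : ((k : ℝ) + 1) * d = T := by rw [hdk]; field_simp
      refine ⟨k + 1, fun i : Fin (k + 2) => (i : ℕ) * d, ?_, by simp, ?_, ?_⟩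
      · intro i j hij
        have : (i : ℕ) < (j : ℕ) := hij
        exact mul_lt_mul_of_pos_right (by exact_mod_cast this) hd
      · show ((Fin.last (k + 1) : ℕ) : ℝ) * d = T
        rw [Fin.val_last]; push_cast; linarith
      · rw [hGdef]
        simp only []
        rw [eval_k hT f k, ← hdk]
        refine Finset.sum_congr rfl fun i _ => ?_
        have hsucc : ((i.succ : Fin (k + 2)) : ℕ) = (i : ℕ) + 1 := Fin.val_succ i
        have hcast : ((i.castSucc : Fin (k + 2)) : ℕ) = (i : ℕ) := Fin.coe_castSucc i
        have e1 : (((i.succ : Fin (k + 2)) : ℕ) : ℝ) * d = (((i : ℕ) : ℝ) + 1) * d := by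
          rw [hsucc]; push_cast; ring
        have e2 : (((i.castSucc : Fin (k + 2)) : ℕ) : ℝ) * d = ((i : ℕ) : ℝ) * d := by
          rw [hcast]
        rw [e1, e2]
        have hΔt : (((i : ℕ) : ℝ) + 1) * d - ((i : ℕ) : ℝ) * d = d := by ring
        have hik1 : (((i : ℕ) : ℝ) + 1) * d ≤ T := by
          have : ((i : ℕ) : ℝ) + 1 ≤ (k : ℝ) + 1 := by exact_mod_cast i.isLt
          nlinarith
        have hik0 : (0 : ℝ) ≤ ((i : ℕ) : ℝ) * d := by positivity
        have hintf : (∫ y in Icc (((i : ℕ) : ℝ) * d) ((((i : ℕ) : ℝ) + 1) * d), f y) =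
            γ ((((i : ℕ) : ℝ) + 1) * d) - γ (((i : ℕ) : ℝ) * d) := by
          have hsub : Icc (((i : ℕ) : ℝ) * d) ((((i : ℕ) : ℝ) + 1) * d) ⊆
              Icc (0 : ℝ) T := fun x hx => ⟨le_trans hik0 hx.1, le_trans hx.2 hik1⟩
          rw [setIntegral_congr_fun measurableSet_Icc
              (fun x hx => Set.indicator_of_mem (hsub hx) γ'),
            integral_Icc_eq_integral_Ioc,
            ← hdiff _ _ hik0 (by nlinarith) hik1]
        have havg : avgf f d ((i : ℕ) : ℤ) =
            (γ ((((i : ℕ) : ℝ) + 1) * d) - γ (((i : ℕ) : ℝ) * d)) / d := by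
          rw [avgf_eq hd]
          push_cast
          rw [hintf]
        rw [hΔt, havg]
    calc liminf (fun k => ∫⁻ s in Set.Icc (0 : ℝ) T, G k s) atTop
        ≤ liminf (fun _ : ℕ => sSup {S : ℝ≥0∞ | ∃ (n : ℕ) (t : Fin (n + 1) → ℝ),
            StrictMono t ∧ t 0 = 0 ∧ t (Fin.last n) = T ∧
            S = ∑ i : Fin n, ENNReal.ofReal ((t i.succ - t i.castSucc) *
              Lf ((γ (t i.succ) - γ (t i.castSucc)) /
                (t i.succ - t i.castSucc)))}) atTop :=
          liminf_le_liminf (Eventually.of_forall fun k => le_sSup (h4 k))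
      _ = _ := liminf_const _
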